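/- arXiv:2403.01448 — 4 statements merged into one kernel-verified Lean document; each statement's English description precedes it below -/
import Mathlib

section
/- Suppose F : K → N is a bounded A-linear map between Hilbert C*-modules such that for every y ∈ N the functional F_y(x) = ⟨y, F(x)⟩ : K → A is adjointable. Then for every y ∈ N and every approximate unit (u_λ) of A, the net ((F_y)*(u_λ)) in K is a Cauchy net. -/
open scoped RightActions
open Filter

/-- The December 2024 Mathlib `CStarModule` (right `Aᵐᵒᵖ`-action), restated verbatim. -/
class CStarModuleOld (A : outParam <| Type*) (E : Type*) [NonUnitalSemiring A] [StarRing A]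
    [Module ℂ A] [AddCommGroup E] [Module ℂ E] [PartialOrder A] [SMul Aᵐᵒᵖ E] [Norm A] [Norm E]
    extends Inner A E where
  inner_add_right {x} {y} {z} : inner x (y + z) = inner x y + inner x z
  inner_self_nonneg {x} : 0 ≤ inner x x
  inner_self {x} : inner x x = 0 ↔ x = 0
  inner_op_smul_right {a : A} {x y : E} : inner x (y <• a) = inner x y * a
  inner_smul_right_complex {z : ℂ} {x} {y} : inner x (z • y) = z • inner x y
  star_inner x y : star (inner x y) = inner y x
  norm_eq_sqrt_norm_inner_self x : ‖x‖ = √‖inner x x‖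

/-- `S` is an adjoint of `T` with respect to the `A`-valued inner products:
`⟪T x, y⟫ = ⟪x, S y⟫` for all `x, y`. -/
def IsAdjointPair (A : Type*) {E F : Type*} [Inner A E] [Inner A F]
    (T : E → F) (S : F → E) : Prop :=
  ∀ (x : E) (y : F), (inner A (T x) y : A) = inner A x (S y)

/-- `T` is adjointable: it possesses an adjoint. -/
def HasAdjoint (A : Type*) {E F : Type*} [Inner A E] [Inner A F] (T : E → F) : Prop :=
  ∃ S : F → E, IsAdjointPair A T S

/-- `T` is `A`-linear: it commutes with the right `A`-action. -/
def IsALinear (A : Type*) {E F : Type*} [SMul Aᵐᵒᵖ E] [SMul Aᵐᵒᵖ F] (T : E → F) : Prop :=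
  ∀ (x : E) (a : A), T (x <• a) = T x <• a

/-- A bounded operator `T : M → N` of Hilbert C*-modules is *locally adjointable* if
`T ∘ γ` is adjointable for every adjointable (`A`-linear bounded) `γ : A → M`. -/
def LocallyAdjointable (A : Type*) [NonUnitalCStarAlgebra A] [PartialOrder A]
    [StarOrderedRing A] {M N : Type*}
    [NormedAddCommGroup M] [NormedSpace ℂ M] [SMul Aᵐᵒᵖ M] [CStarModuleOld A M]
    [Inner A N] (T : M → N) : Prop :=
  ∀ γ : A →L[ℂ] M, IsALinear A ⇑γ → HasAdjoint A ⇑γ → HasAdjoint A (T ∘ ⇑γ)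

variable {A : Type*} [NonUnitalCStarAlgebra A] [PartialOrder A] [StarOrderedRing A]
variable {K N : Type*}
  [NormedAddCommGroup K] [NormedSpace ℂ K] [SMul Aᵐᵒᵖ K] [CStarModuleOld A K]
  [NormedAddCommGroup N] [NormedSpace ℂ N] [SMul Aᵐᵒᵖ N] [CStarModuleOld A N]

namespace CStarModuleOld

variable {E : Type*} [NormedAddCommGroup E] [NormedSpace ℂ E] [SMul Aᵐᵒᵖ E] [CStarModuleOld A E]

lemma inner_op_smul_left {a : A} {x y : E} : inner A (x <• a) y = star a * inner A x y := by
  rw [← star_inner y, inner_op_smul_right, star_mul, star_inner]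

lemma inner_sub_right {x y z : E} : inner A x (y - z) = inner A x y - inner A x z := by
  rw [sub_eq_add_neg, inner_add_right, ← neg_one_smul ℂ z, inner_smul_right_complex, neg_one_smul,
    ← sub_eq_add_neg]

lemma inner_sub_left {x y z : E} : inner A (x - y) z = inner A x z - inner A y z := by
  rw [← star_inner z, inner_sub_right, star_sub, star_inner, star_inner]

lemma inner_zero_right {x : E} : inner A x 0 = 0 := by
  have := inner_sub_right (A := A) (x := x) (y := 0) (z := 0)
  simpa using this

lemma inner_zero_left {x : E} : inner A 0 x = 0 := by
  rw [← star_inner x, inner_zero_right, star_zero]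

lemma inner_smul_right_real {r : ℝ} {x y : E} : inner A x (r • y) = r • inner A x y := by
  have h₁ : r • y = (r : ℂ) • y := by simp
  rw [h₁, inner_smul_right_complex]
  simp

lemma inner_smul_left_real {r : ℝ} {x y : E} : inner A (r • x) y = r • inner A x y := by
  rw [← star_inner y, inner_smul_right_real, star_smul, star_trivial, star_inner]

lemma norm_sq_eq {x : E} : ‖x‖ ^ 2 = ‖inner A x x‖ := by
  rw [norm_eq_sqrt_norm_inner_self (A := A) x, Real.sq_sqrt (norm_nonneg _)]

lemma inner_mul_inner_swap_le {x y : E} :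
    inner A y x * inner A x y ≤ ‖x‖ ^ 2 • inner A y y := by
  rcases eq_or_ne x 0 with h | h
  · simp [h, inner_zero_left, inner_zero_right]
  · have hpos : 0 < ‖x‖ := norm_pos_iff.mpr h
    have h₁ : ∀ a : A, (0 : A) ≤ ‖x‖ ^ 2 • (star a * a) - ‖x‖ ^ 2 • (star a * inner A x y)
        - ‖x‖ ^ 2 • (inner A y x * a) + ‖x‖ ^ 2 • (‖x‖ ^ 2 • inner A y y) := fun a => by
      calc (0 : A) ≤ inner A (x <• a - ‖x‖ ^ 2 • y) (x <• a - ‖x‖ ^ 2 • y) := inner_self_nonneg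
        _ = star a * inner A x x * a - ‖x‖ ^ 2 • (star a * inner A x y)
            - ‖x‖ ^ 2 • (inner A y x * a) + ‖x‖ ^ 2 • (‖x‖ ^ 2 • inner A y y) := by
          simp only [inner_sub_right, inner_op_smul_right, inner_sub_left, inner_op_smul_left,
            inner_smul_left_real, inner_smul_right_real, mul_smul_comm, smul_mul_assoc,
            smul_sub, mul_sub, sub_mul, mul_assoc]
          abel
        _ ≤ ‖x‖ ^ 2 • (star a * a) - ‖x‖ ^ 2 • (star a * inner A x y)
            - ‖x‖ ^ 2 • (inner A y x * a) + ‖x‖ ^ 2 • (‖x‖ ^ 2 • inner A y y) := by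
          gcongr
          calc star a * inner A x x * a ≤ ‖inner A x x‖ • (star a * a) :=
              CStarAlgebra.star_left_conjugate_le_norm_smul (hb := star_inner x x)
            _ = ‖x‖ ^ 2 • (star a * a) := by rw [norm_sq_eq]
    specialize h₁ (inner A x y)
    simp only [star_inner, sub_self, zero_sub, le_neg_add_iff_add_le, add_zero] at h₁
    rwa [smul_le_smul_iff_of_pos_left (pow_pos hpos _)] at h₁

variable (E) in
lemma norm_inner_le {x y : E} : ‖inner A x y‖ ≤ ‖x‖ * ‖y‖ := by
  have : ‖inner A x y‖ ^ 2 ≤ (‖x‖ * ‖y‖) ^ 2 := by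
    calc ‖inner A x y‖ ^ 2 = ‖inner A y x * inner A x y‖ := by
          rw [← star_inner x y, CStarRing.norm_star_mul_self, pow_two]
    _ ≤ ‖‖x‖ ^ 2 • inner A y y‖ :=
        CStarAlgebra.norm_le_norm_of_nonneg_of_le
          (by rw [← star_inner x y]; exact star_mul_self_nonneg _) inner_mul_inner_swap_le
    _ = ‖x‖ ^ 2 * ‖inner A y y‖ := by rw [norm_smul, Real.norm_of_nonneg (by positivity)]
    _ = ‖x‖ ^ 2 * ‖y‖ ^ 2 := by rw [norm_sq_eq (x := y)]
    _ = (‖x‖ * ‖y‖) ^ 2 := by ring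
  exact (pow_le_pow_iff_left₀ (norm_nonneg _) (by positivity) (by norm_num : (2:ℕ) ≠ 0)).mp this

end CStarModuleOld

/-- If every functional `F_y : x ↦ ⟪y, F x⟫` is adjointable (with adjoint `G y`),
then for every `y` and every approximate unit `(u_λ)` of `A`, the net `((F_y)* (u_λ))`
is a Cauchy net in `K`. -/
theorem adjoint_of_functional_on_approxUnit_cauchy
    {Λ : Type*} [Nonempty Λ] [SemilatticeSup Λ] (u : Λ → A)
    (hu_pos : ∀ i, 0 ≤ u i) (hu_bdd : ∀ i, ‖u i‖ ≤ 1)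
    (hu_approx : ∀ a : A, Tendsto (fun i => u i * a) atTop (nhds a) ∧
      Tendsto (fun i => a * u i) atTop (nhds a))
    (F : K →L[ℂ] N) (hF : IsALinear A ⇑F) (G : N → A → K)
    (hG : ∀ y : N, IsAdjointPair A (fun x : K => (inner A y (F x) : A)) (G y)) :
    ∀ y : N, CauchySeq (fun i => G y (u i)) := by
  intro y
  set S : A → K := G y with hS
  set x : Λ → K := fun i => S (u i) with hx
  have husa : ∀ i, star (u i) = u i := fun i => (IsSelfAdjoint.of_nonneg (hu_pos i))
  -- key identity
  have key : ∀ i j, (inner A (x i) (x j) : A) = inner A (y <• u i) (F (x j)) := by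
    intro i j
    have hR : ∀ (b a : A), inner A y (F (x j)) * b * star a
        = inner A y (F (x j)) * star a * b := by
      intro b a
      have e1 := hG y (x j <• b) a
      have e2 := hG y (x j) a
      change a * star (inner A y (F (x j <• b))) = _ at e1
      change a * star (inner A y (F (x j))) = _ at e2
      rw [hF, CStarModuleOld.inner_op_smul_right, CStarModuleOld.inner_op_smul_left, ← e2] at e1
      have e3 := congrArg star e1
      simpa only [star_mul, star_star, mul_assoc] using e3
    set g := inner A y (F (x j)) with hg
    have hc : ∀ p q : A, g * (p * q) = g * (q * p) := fun p q => by
      have := hR p (star q)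
      rw [star_star] at this
      simpa only [mul_assoc] using this
    have hcomm : g * u i = u i * g := by
      set a := u i with ha
      have hsa : star a = a := husa i
      set z := g * a - a * g with hz
      have hzz : z * star z = 0 := by
        have hsz : star z = a * star g - star g * a := by
          rw [hz, star_sub, star_mul, star_mul, hsa]
        rw [hsz, hz]
        have t1 := hc a (a * star g)
        have t2 := hc a (star g)
        calc (g * a - a * g) * (a * star g - star g * a)
            = (g * (a * (a * star g)) - g * ((a * star g) * a))
              - a * (g * (a * star g) - g * (star g * a)) := by noncomm_ring
          _ = 0 := by rw [t1, t2]; simp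
      have hsz0 : star z = 0 := by
        have h0 : star (star z) * star z = 0 := by rw [star_star]; exact hzz
        exact (CStarRing.star_mul_self_eq_zero_iff _).mp h0
      have hz0 : z = 0 := by simpa using congrArg star hsz0
      rw [hz] at hz0
      exact sub_eq_zero.mp hz0
    have h1 : u i * star g = inner A (x j) (x i) := hG y (x j) (u i)
    rw [← CStarModuleOld.star_inner (x j) (x i), ← h1, star_mul, star_star,
      CStarModuleOld.inner_op_smul_left, husa, hcomm]
  have keysub : ∀ i j, (inner A (x i - x j) (x i - x j) : A)
      = inner A (y <• u i - y <• u j) (F (x i) - F (x j)) := by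
    intro i j
    simp only [CStarModuleOld.inner_sub_left, CStarModuleOld.inner_sub_right, key]
  -- norm estimate
  have hest : ∀ i j, ‖x i - x j‖ ≤ ‖F‖ * ‖y <• u i - y <• u j‖ := by
    intro i j
    rcases eq_or_lt_of_le (norm_nonneg (x i - x j)) with h0 | h0
    · rw [← h0]; positivity
    have h1 : ‖x i - x j‖ ^ 2 ≤ (‖F‖ * ‖y <• u i - y <• u j‖) * ‖x i - x j‖ := by
      rw [CStarModuleOld.norm_sq_eq, keysub]
      calc ‖(inner A (y <• u i - y <• u j) (F (x i) - F (x j)) : A)‖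
          ≤ ‖y <• u i - y <• u j‖ * ‖F (x i) - F (x j)‖ := CStarModuleOld.norm_inner_le _
        _ = ‖y <• u i - y <• u j‖ * ‖F (x i - x j)‖ := by rw [map_sub]
        _ ≤ ‖y <• u i - y <• u j‖ * (‖F‖ * ‖x i - x j‖) := by
            gcongr; exact F.le_opNorm _
        _ = (‖F‖ * ‖y <• u i - y <• u j‖) * ‖x i - x j‖ := by ring
    have := h1
    rw [pow_two] at this
    exact le_of_mul_le_mul_right this h0
  -- (y <• u i) tends to y
  have hyu : Tendsto (fun i => y <• u i) atTop (nhds y) := by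
    have hn : Tendsto (fun i => ‖y <• u i - y‖ ^ 2) atTop (nhds 0) := by
      have heq : ∀ i, ‖y <• u i - y‖ ^ 2
          = ‖u i * ((inner A y y : A) * u i) - u i * (inner A y y : A)
              - (inner A y y : A) * u i + (inner A y y : A)‖ := by
        intro i
        rw [CStarModuleOld.norm_sq_eq]
        congr 1
        simp only [CStarModuleOld.inner_sub_left, CStarModuleOld.inner_sub_right,
          CStarModuleOld.inner_op_smul_left, CStarModuleOld.inner_op_smul_right, husa]
        noncomm_ring
      simp only [heq]
      have h1 : Tendsto (fun i => u i * ((inner A y y : A) * u i) - u i * (inner A y y : A))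
          atTop (nhds 0) := by
        have hb : Tendsto (fun i => ‖u i * ((inner A y y : A) * u i) - u i * (inner A y y : A)‖)
            atTop (nhds 0) := by
          have h2 : Tendsto (fun i => ‖(inner A y y : A) * u i - (inner A y y : A)‖)
              atTop (nhds 0) := by
            have := (hu_approx (inner A y y)).2
            simpa using (tendsto_iff_norm_sub_tendsto_zero.mp this)
          refine squeeze_zero (fun i => norm_nonneg _) (fun i => ?_) h2
          calc ‖u i * ((inner A y y : A) * u i) - u i * (inner A y y : A)‖
              = ‖u i * ((inner A y y : A) * u i - (inner A y y : A))‖ := by rw [mul_sub]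
            _ ≤ ‖u i‖ * ‖(inner A y y : A) * u i - (inner A y y : A)‖ := norm_mul_le _ _
            _ ≤ 1 * ‖(inner A y y : A) * u i - (inner A y y : A)‖ := by
                gcongr; exact hu_bdd i
            _ = ‖(inner A y y : A) * u i - (inner A y y : A)‖ := one_mul _
        exact tendsto_zero_iff_norm_tendsto_zero.mpr hb
      have h3 : Tendsto (fun i => (inner A y y : A) * u i - (inner A y y : A)) atTop (nhds 0) := by
        have h := (hu_approx (inner A y y)).2
        have h' : Tendsto (fun _ : Λ => (inner A y y : A)) atTop (nhds (inner A y y : A)) :=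
          tendsto_const_nhds
        simpa using h.sub h'
      have h4 : Tendsto (fun i => u i * ((inner A y y : A) * u i) - u i * (inner A y y : A)
          - (inner A y y : A) * u i + (inner A y y : A)) atTop (nhds 0) := by
        have h := h1.sub h3
        rw [sub_zero] at h
        exact h.congr fun i => by abel
      simpa using h4.norm
    have hn' : Tendsto (fun i => ‖y <• u i - y‖) atTop (nhds 0) := by
      have := hn.sqrt
      simpa [Real.sqrt_sq (norm_nonneg _)] using this
    exact tendsto_iff_norm_sub_tendsto_zero.mpr (by simpa using hn')
  have hyc : CauchySeq (fun i => y <• u i) := hyu.cauchySeq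
  -- conclude
  rw [Metric.cauchySeq_iff] at hyc ⊢
  intro ε hε
  obtain ⟨M, hM⟩ := hyc (ε / (‖F‖ + 1)) (by positivity)
  refine ⟨M, fun i hi j hj => ?_⟩
  have h1 : dist (x i) (x j) ≤ ‖F‖ * ‖y <• u i - y <• u j‖ := by
    rw [dist_eq_norm]; exact hest i j
  have h2 : ‖y <• u i - y <• u j‖ < ε / (‖F‖ + 1) := by
    rw [← dist_eq_norm]; exact hM i hi j hj
  calc dist (x i) (x j) ≤ ‖F‖ * ‖y <• u i - y <• u j‖ := h1
    _ ≤ (‖F‖ + 1) * ‖y <• u i - y <• u j‖ := by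
        gcongr; linarith [norm_nonneg F]
    _ < (‖F‖ + 1) * (ε / (‖F‖ + 1)) :=
        mul_lt_mul_of_pos_left h2 (by positivity)
    _ = ε := by field_simp
end

section
/- A bounded A-linear map F : M → ℓ²(A) is locally adjointable if and only if each coordinate map π_k ∘ F : M → A, k ∈ ℕ, is locally adjointable. -/
open scoped RightActions
open Filter

/-- The series `∑ f i` is norm-convergent (its partial sums converge). -/
def SeriesConv {A : Type*} [NonUnitalCStarAlgebra A] (f : ℕ → A) : Prop :=
  ∃ l : A, Tendsto (fun n => ∑ i ∈ Finset.range n, f i) atTop (nhds l)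

/-- `x : ℕ → A` is an element of the standard Hilbert module `ℓ²(A)`:
the series `∑ xᵢ* xᵢ` is norm-convergent. -/
def MemL2 {A : Type*} [NonUnitalCStarAlgebra A] (x : ℕ → A) : Prop :=
  SeriesConv fun i => star (x i) * x i

/-- The (December 2024) Mathlib notion of a Hilbert C⋆-module with a right `A`-action. -/
class RightCStarModule (A E : Type*) [NonUnitalSemiring A] [StarRing A]
    [Module ℂ A] [AddCommGroup E] [Module ℂ E] [PartialOrder A] [SMul Aᵐᵒᵖ E] [Norm A] [Norm E]
    extends Inner A E where
  inner_add_right {x} {y} {z} : inner x (y + z) = inner x y + inner x z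
  inner_self_nonneg {x} : 0 ≤ inner x x
  inner_self {x} : inner x x = 0 ↔ x = 0
  inner_op_smul_right {a : A} {x y : E} : inner x (y <• a) = inner x y * a
  inner_smul_right_complex {z : ℂ} {x} {y} : inner x (z • y) = z • inner x y
  star_inner x y : star (inner x y) = inner y x
  norm_eq_sqrt_norm_inner_self x : ‖x‖ = √‖inner x x‖

/-- A C⋆-algebra as a Hilbert C⋆-module over itself, with `⟪x, y⟫ = star x * y`. -/
instance {A : Type*} [NonUnitalCStarAlgebra A] [PartialOrder A] [StarOrderedRing A] :
    RightCStarModule A A where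
  inner x y := star x * y
  inner_add_right := mul_add ..
  inner_self_nonneg := star_mul_self_nonneg _
  inner_self := CStarRing.star_mul_self_eq_zero_iff _
  inner_op_smul_right := (mul_assoc ..).symm
  inner_smul_right_complex := mul_smul_comm ..
  star_inner x y := by simp
  norm_eq_sqrt_norm_inner_self x := by
    rw [CStarRing.norm_star_mul_self, Real.sqrt_mul_self (norm_nonneg _)]

variable {A : Type*} [NonUnitalCStarAlgebra A] [PartialOrder A] [StarOrderedRing A]
variable {M : Type*} [NormedAddCommGroup M] [NormedSpace ℂ M] [SMul Aᵐᵒᵖ M] [RightCStarModule A M]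

/-- Cauchy–Schwarz for finite `A`-valued "inner products". -/
private lemma locAdj_cs (s : Finset ℕ) (x y : ℕ → A) :
    ‖∑ i ∈ s, star (x i) * y i‖ ≤
      Real.sqrt ‖∑ i ∈ s, star (x i) * x i‖ * Real.sqrt ‖∑ i ∈ s, star (y i) * y i‖ := by
  classical
  let X : WithCStarModule A (∀ _ : s, A) := (WithCStarModule.equiv A _).symm fun i => star (y i)
  let Y : WithCStarModule A (∀ _ : s, A) := (WithCStarModule.equiv A _).symm fun i => star (x i)
  have h := CStarModule.norm_inner_le (A := A) (WithCStarModule A (∀ _ : s, A)) (x := X) (y := Y)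
  rw [WithCStarModule.pi_inner] at h
  rw [WithCStarModule.pi_norm, WithCStarModule.pi_norm] at h
  simp only [WithCStarModule.inner_def, X, Y, WithCStarModule.equiv_symm_pi_apply, star_star] at h
  have e1 : (∑ i : s, star (x i) * y i) = ∑ i ∈ s, star (x i) * y i :=
    s.sum_coe_sort (fun i => star (x i) * y i)
  have e2 : (∑ i : s, star (x i) * x i) = ∑ i ∈ s, star (x i) * x i :=
    s.sum_coe_sort (fun i => star (x i) * x i)
  have e3 : (∑ i : s, star (y i) * y i) = ∑ i ∈ s, star (y i) * y i :=
    s.sum_coe_sort (fun i => star (y i) * y i)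
  rw [e1, e2, e3] at h
  exact h.trans_eq (mul_comm _ _)

/-- Tail sums of a norm-convergent series of nonnegative terms are small. -/
private lemma locAdj_tail (y : ℕ → A) (hy : MemL2 y) :
    ∀ ε : ℝ, 0 < ε → ∃ N : ℕ, ∀ t : Finset ℕ, (∀ i ∈ t, N ≤ i) →
      ‖∑ i ∈ t, star (y i) * y i‖ < ε := by
  intro ε hε
  obtain ⟨l, hl⟩ := hy
  have hc : CauchySeq (fun n => ∑ i ∈ Finset.range n, star (y i) * y i) := hl.cauchySeq
  obtain ⟨N, hN⟩ := Metric.cauchySeq_iff'.1 hc ε hε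
  refine ⟨N, fun t ht => ?_⟩
  set n := N + 1 + t.sup id with hn
  have hsub : t ⊆ Finset.range n \ Finset.range N := by
    intro i hi
    simp only [Finset.mem_sdiff, Finset.mem_range, not_lt]
    have h1 : i ≤ t.sup id := Finset.le_sup (f := id) hi
    exact ⟨by omega, ht i hi⟩
  have h0 : (0:A) ≤ ∑ i ∈ t, star (y i) * y i :=
    Finset.sum_nonneg fun i _ => star_mul_self_nonneg _
  have h1 : (∑ i ∈ t, star (y i) * y i)
      ≤ ∑ i ∈ Finset.range n \ Finset.range N, star (y i) * y i :=
    Finset.sum_le_sum_of_subset_of_nonneg hsub (fun i _ _ => star_mul_self_nonneg _)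
  have h2 : (∑ i ∈ Finset.range n \ Finset.range N, star (y i) * y i)
      = (∑ i ∈ Finset.range n, star (y i) * y i)
        - ∑ i ∈ Finset.range N, star (y i) * y i :=
    Finset.sum_sdiff_eq_sub (Finset.range_subset_range.2 (by omega))
  calc ‖∑ i ∈ t, star (y i) * y i‖
      ≤ ‖∑ i ∈ Finset.range n \ Finset.range N, star (y i) * y i‖ :=
        CStarAlgebra.norm_le_norm_of_nonneg_of_le h0 h1
    _ < ε := by rw [h2]; simpa [dist_eq_norm] using hN n (by omega)

private lemma locAdj_summable (y : ℕ → A) (hy : MemL2 y) :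
    Summable (fun i => star (y i) * y i) := by
  rw [summable_iff_vanishing]
  intro e he
  obtain ⟨ε, hε, hball⟩ := Metric.mem_nhds_iff.1 he
  obtain ⟨N, hN⟩ := locAdj_tail y hy ε hε
  refine ⟨Finset.range N, fun t ht => hball ?_⟩
  rw [mem_ball_zero_iff]
  exact hN t (fun i hi => not_lt.1 fun h =>
    (Finset.disjoint_left.1 ht hi (Finset.mem_range.2 h)))

private lemma locAdj_finset_le_tsum (x : ℕ → A) (hx : MemL2 x) (s : Finset ℕ) :
    ‖∑ i ∈ s, star (x i) * x i‖ ≤ ‖∑' i, star (x i) * x i‖ := by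
  have hsum := locAdj_summable x hx
  have htend := hsum.hasSum.tendsto_sum_nat
  refine ge_of_tendsto htend.norm ?_
  filter_upwards [eventually_ge_atTop (s.sup id + 1)] with n hn
  have hsub : s ⊆ Finset.range n := fun i hi =>
    Finset.mem_range.2 (lt_of_lt_of_le (Nat.lt_succ_of_le (Finset.le_sup (f := id) hi)) hn)
  exact CStarAlgebra.norm_le_norm_of_nonneg_of_le
    (Finset.sum_nonneg fun i _ => star_mul_self_nonneg _)
    (Finset.sum_le_sum_of_subset_of_nonneg hsub fun i _ _ => star_mul_self_nonneg _)

/-- A bounded `A`-linear map `F : M → ℓ²(A)` is locally adjointable iff every coordinate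
`π_k ∘ F : M → A` is locally adjointable. -/
theorem locallyAdjointable_iff_coordinates (F : M → ℕ → A)
    (hmem : ∀ x, MemL2 (F x))
    (hadd : ∀ x y : M, F (x + y) = F x + F y)
    (hsmul : ∀ (c : ℂ) (x : M), F (c • x) = c • F x)
    (hAlin : ∀ (x : M) (a : A), F (x <• a) = fun i => F x i * a)
    (hbdd : ∃ C : ℝ, ∀ x : M, Real.sqrt ‖∑' i, star (F x i) * F x i‖ ≤ C * ‖x‖) :
    -- `F` is locally adjointable (i.e. `F ∘ γ : A → ℓ²(A)` is adjointable for each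
    -- adjointable `γ : A → M`) ...
    (∀ γ : A →L[ℂ] M, IsALinear A ⇑γ → HasAdjoint A ⇑γ →
      ∃ S : (ℕ → A) → A, ∀ (a : A) (y : ℕ → A), MemL2 y →
        (∑' i, star (F (γ a) i) * y i) = (inner A a (S y) : A))
    -- ... iff every coordinate `π_k ∘ F` is locally adjointable
    ↔ ∀ k : ℕ, ∀ γ : A →L[ℂ] M, IsALinear A ⇑γ → HasAdjoint A ⇑γ →
        HasAdjoint A (fun a : A => F (γ a) k) := by
  classical
  obtain ⟨C, hC⟩ := hbdd
  set C' : ℝ := max C 0 with hC'def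
  have hC'0 : (0:ℝ) ≤ C' := le_max_right _ _
  have hFt : ∀ (z : M) (t : Finset ℕ), ‖∑ i ∈ t, star (F z i) * F z i‖ ≤ (C' * ‖z‖)^2 := by
    intro z t
    have h1 := locAdj_finset_le_tsum (F z) (hmem z) t
    have h2 : Real.sqrt ‖∑' i, star (F z i) * F z i‖ ≤ C' * ‖z‖ :=
      (hC z).trans (mul_le_mul_of_nonneg_right (le_max_left _ _) (norm_nonneg _))
    have h3 : ‖∑' i, star (F z i) * F z i‖ ≤ (C' * ‖z‖)^2 := by
      have h4 := Real.sq_sqrt (norm_nonneg (∑' i, star (F z i) * F z i))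
      nlinarith [Real.sqrt_nonneg ‖∑' i, star (F z i) * F z i‖]
    exact h1.trans h3
  constructor
  · -- forward direction
    intro h k γ hlin hadj
    obtain ⟨S, hS⟩ := h γ hlin hadj
    refine ⟨fun b => S (Pi.single k b), fun a b => ?_⟩
    have hmem1 : MemL2 (Pi.single k b) := by
      refine ⟨star b * b, ?_⟩
      apply tendsto_atTop_of_eventually_const (i₀ := k + 1)
      intro n hn
      rw [Finset.sum_eq_single k]
      · simp
      · intro i _ hik; simp [Pi.single_eq_of_ne hik]
      · intro hk; exact absurd (Finset.mem_range.2 (by omega)) hk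
    have h5 := hS a (Pi.single k b) hmem1
    rw [← h5, tsum_eq_single k]
    · simp [WithCStarModule.inner_def]; rfl
    · intro i hik; simp [Pi.single_eq_of_ne hik]
  · -- backward direction
    intro h γ hlin hadj
    choose Sk hSk using fun k => h k γ hlin hadj
    have hSk' : ∀ (k : ℕ) (a b : A), star (F (γ a) k) * b = star a * Sk k b :=
      fun k a b => hSk k a b
    set K : ℝ := C' * ‖γ‖ + 1 with hKdef
    have hK0 : (0:ℝ) < K := by positivity
    have hest : ∀ (a : A) (t : Finset ℕ) (y : ℕ → A),
        ‖∑ i ∈ t, star (F (γ a) i) * y i‖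
          ≤ (K * ‖a‖) * Real.sqrt ‖∑ i ∈ t, star (y i) * y i‖ := by
      intro a t y
      refine (locAdj_cs t (F (γ a)) y).trans ?_
      have h1 : Real.sqrt ‖∑ i ∈ t, star (F (γ a) i) * F (γ a) i‖ ≤ K * ‖a‖ := by
        refine (Real.sqrt_le_sqrt (hFt (γ a) t)).trans ?_
        rw [Real.sqrt_sq (by positivity)]
        calc C' * ‖γ a‖ ≤ C' * (‖γ‖ * ‖a‖) :=
              mul_le_mul_of_nonneg_left (γ.le_opNorm a) hC'0
          _ = (C' * ‖γ‖) * ‖a‖ := by ring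
          _ ≤ K * ‖a‖ := mul_le_mul_of_nonneg_right (by simp [hKdef]) (norm_nonneg a)
      exact mul_le_mul_of_nonneg_right h1 (Real.sqrt_nonneg _)
    have key : ∀ y : ℕ → A, MemL2 y → ∃ l : A, ∀ a : A,
        (∑' i, star (F (γ a) i) * y i) = star a * l := by
      intro y hy
      set g : ℕ → A := fun n => ∑ i ∈ Finset.range n, Sk i (y i) with hg
      have hid : ∀ (a : A) (t : Finset ℕ),
          (∑ i ∈ t, star (F (γ a) i) * y i) = star a * ∑ i ∈ t, Sk i (y i) := by
        intro a t; rw [Finset.mul_sum]; exact Finset.sum_congr rfl fun i _ => hSk' i a (y i)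
      have hcauchy : CauchySeq g := by
        rw [Metric.cauchySeq_iff']
        intro ε hε
        obtain ⟨N, hN⟩ := locAdj_tail y hy ((ε / (2 * K))^2) (by positivity)
        refine ⟨N, fun n hn => ?_⟩
        set a : A := g n - g N with ha
        have hdiff : g n - g N = ∑ i ∈ Finset.range n \ Finset.range N, Sk i (y i) :=
          (Finset.sum_sdiff_eq_sub (Finset.range_subset_range.2 hn)).symm
        have hsa : star a * a
            = ∑ i ∈ Finset.range n \ Finset.range N, star (F (γ a) i) * y i := by
          calc star a * a = star a * ∑ i ∈ Finset.range n \ Finset.range N, Sk i (y i) := by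
                rw [← hdiff]
            _ = _ := (hid a _).symm
        have hsqrt : Real.sqrt ‖∑ i ∈ Finset.range n \ Finset.range N, star (y i) * y i‖
            ≤ ε / (2 * K) := by
          have h6 := hN (Finset.range n \ Finset.range N)
            (fun i hi => by
              simp only [Finset.mem_sdiff, Finset.mem_range, not_lt] at hi; exact hi.2)
          calc Real.sqrt ‖∑ i ∈ Finset.range n \ Finset.range N, star (y i) * y i‖
              ≤ Real.sqrt ((ε / (2 * K))^2) := Real.sqrt_le_sqrt h6.le
            _ = ε / (2 * K) := Real.sqrt_sq (by positivity)
        have hbound : ‖a‖ * ‖a‖ ≤ (K * ‖a‖) * (ε / (2 * K)) := by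
          calc ‖a‖ * ‖a‖ = ‖star a * a‖ := (CStarRing.norm_star_mul_self).symm
            _ = ‖∑ i ∈ Finset.range n \ Finset.range N, star (F (γ a) i) * y i‖ := by rw [hsa]
            _ ≤ (K * ‖a‖) * Real.sqrt ‖∑ i ∈ Finset.range n \ Finset.range N,
                  star (y i) * y i‖ := hest a _ y
            _ ≤ (K * ‖a‖) * (ε / (2 * K)) :=
                mul_le_mul_of_nonneg_left hsqrt (by positivity)
        have hfin : ‖a‖ ≤ K * (ε / (2 * K)) := by
          rcases eq_or_lt_of_le (norm_nonneg a) with h0 | h0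
          · rw [← h0]; positivity
          · have : ‖a‖ * ‖a‖ ≤ ‖a‖ * (K * (ε / (2 * K))) := by
              calc ‖a‖ * ‖a‖ ≤ (K * ‖a‖) * (ε / (2 * K)) := hbound
                _ = ‖a‖ * (K * (ε / (2 * K))) := by ring
            exact le_of_mul_le_mul_left this h0
        have hKe : K * (ε / (2 * K)) = ε / 2 := by field_simp
        rw [dist_eq_norm]
        calc ‖g n - g N‖ = ‖a‖ := by rw [ha]
          _ ≤ ε / 2 := by rw [← hKe]; exact hfin
          _ < ε := by linarith
      obtain ⟨l, hl⟩ := cauchySeq_tendsto_of_complete hcauchy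
      refine ⟨l, fun a => ?_⟩
      have hsummable : Summable (fun i => star (F (γ a) i) * y i) := by
        rw [summable_iff_vanishing]
        intro e he
        obtain ⟨ε, hε, hball⟩ := Metric.mem_nhds_iff.1 he
        set B : ℝ := K * ‖a‖ + 1 with hBdef
        have hB0 : (0:ℝ) < B := by positivity
        obtain ⟨N, hN⟩ := locAdj_tail y hy ((ε / (2 * B))^2) (by positivity)
        refine ⟨Finset.range N, fun t ht => hball ?_⟩
        rw [mem_ball_zero_iff]
        have htN : ∀ i ∈ t, N ≤ i := fun i hi => not_lt.1 fun hlt =>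
          Finset.disjoint_left.1 ht hi (Finset.mem_range.2 hlt)
        have hsqrt : Real.sqrt ‖∑ i ∈ t, star (y i) * y i‖ ≤ ε / (2 * B) := by
          calc Real.sqrt ‖∑ i ∈ t, star (y i) * y i‖
              ≤ Real.sqrt ((ε / (2 * B))^2) := Real.sqrt_le_sqrt (hN t htN).le
            _ = ε / (2 * B) := Real.sqrt_sq (by positivity)
        calc ‖∑ i ∈ t, star (F (γ a) i) * y i‖
            ≤ (K * ‖a‖) * Real.sqrt ‖∑ i ∈ t, star (y i) * y i‖ := hest a t y
          _ ≤ B * (ε / (2 * B)) := by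
              have h7 : K * ‖a‖ ≤ B := by simp [hBdef]
              have h8 : (0:ℝ) ≤ K * ‖a‖ := by positivity
              have h9 : (0:ℝ) ≤ ε / (2 * B) := by positivity
              exact mul_le_mul h7 hsqrt (Real.sqrt_nonneg _) hB0.le
          _ = ε / 2 := by field_simp
          _ < ε := by linarith
      have htend1 : Tendsto (fun n => ∑ i ∈ Finset.range n, star (F (γ a) i) * y i)
          atTop (nhds (∑' i, star (F (γ a) i) * y i)) := hsummable.hasSum.tendsto_sum_nat
      have htend2 : Tendsto (fun n => ∑ i ∈ Finset.range n, star (F (γ a) i) * y i)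
          atTop (nhds (star a * l)) := by
        have heq : (fun n => ∑ i ∈ Finset.range n, star (F (γ a) i) * y i)
            = fun n => star a * g n := funext fun n => hid a _
        rw [heq]
        exact hl.const_mul (star a)
      exact tendsto_nhds_unique htend1 htend2
    refine ⟨fun y => if hy : MemL2 y then (key y hy).choose else 0, fun a y hy => ?_⟩
    have hrw : (fun y => if hy : MemL2 y then (key y hy).choose else 0) y
        = (key y hy).choose := dif_pos hy
    rw [hrw]
    exact (key y hy).choose_spec a
end

section
/- Let A be a unital C*-algebra. A bounded A-linear functional Γ : ℓ²(A) → A is adjointable if and only if the sequence Γ_i = Γ(e_i)* (where e_i is the i-th standard basis element) satisfies: the series ∑_i Γ_i* Γ_i converges in norm in A. Moreover, in that case Γ(x) = ∑_i Γ_i* x_i and the adjoint is Γ*(a) = (Γ_1 a, Γ_2 a, …). -/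
open scoped RightActions
open Filter

section aux
variable {A : Type*} [CStarAlgebra A] [PartialOrder A] [StarOrderedRing A]

lemma seriesConv_of_summable {f : ℕ → A} (h : Summable f) : SeriesConv f :=
  ⟨∑' i, f i, h.hasSum.tendsto_sum_nat⟩

lemma summable_of_seriesConv_nonneg {f : ℕ → A} (hf : SeriesConv f) (h0 : ∀ i, 0 ≤ f i) :
    Summable f := by
  classical
  rw [summable_iff_vanishing]
  intro e he
  obtain ⟨l, hl⟩ := hf
  have hc := hl.cauchySeq
  rw [Metric.cauchySeq_iff'] at hc
  obtain ⟨ε, hε, hεe⟩ := Metric.mem_nhds_iff.mp he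
  obtain ⟨N, hN⟩ := hc ε hε
  refine ⟨Finset.range N, fun t ht => ?_⟩
  apply hεe
  rw [Metric.mem_ball, dist_zero_right]
  obtain ⟨m, hm⟩ := t.exists_nat_subset_range
  have hm' : t ⊆ Finset.range (max m N) \ Finset.range N := by
    intro i hi
    rw [Finset.mem_sdiff]
    refine ⟨Finset.range_subset_range.mpr (le_max_left m N) (hm hi), ?_⟩
    exact fun h => (Finset.disjoint_left.mp ht hi) h
  have h1 : ∑ i ∈ t, f i ≤ ∑ i ∈ Finset.range (max m N) \ Finset.range N, f i :=
    Finset.sum_le_sum_of_subset_of_nonneg hm' (fun i _ _ => h0 i)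
  have h2 : ∑ i ∈ Finset.range (max m N) \ Finset.range N, f i
      = ∑ i ∈ Finset.range (max m N), f i - ∑ i ∈ Finset.range N, f i :=
    Finset.sum_sdiff_eq_sub (Finset.range_subset_range.mpr (le_max_right m N))
  calc ‖∑ i ∈ t, f i‖ ≤ ‖∑ i ∈ Finset.range (max m N) \ Finset.range N, f i‖ :=
        CStarAlgebra.norm_le_norm_of_nonneg_of_le (Finset.sum_nonneg fun i _ => h0 i) h1
    _ < ε := by
        rw [h2, ← dist_eq_norm]
        exact hN _ (le_max_right m N)

lemma memL2_of_forall_ne_zero {x : ℕ → A} (F : Finset ℕ) (h : ∀ j ∉ F, x j = 0) :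
    MemL2 x := by
  refine seriesConv_of_summable (summable_of_ne_finset_zero (s := F) fun j hj => ?_)
  rw [h j hj, mul_zero]

lemma memL2_single (i : ℕ) (c : A) : MemL2 (Pi.single i c) :=
  memL2_of_forall_ne_zero {i} (fun j hj => by
    rw [Pi.single_eq_of_ne (show j ≠ i by simpa using hj)])

lemma memL2_restrict (x : ℕ → A) (F : Finset ℕ) :
    MemL2 (fun j => if j ∈ F then x j else 0) := by
  classical
  refine memL2_of_forall_ne_zero F (fun j hj => ?_)
  simp [hj]

lemma summable_memL2 {x : ℕ → A} (hx : MemL2 x) : Summable fun i => star (x i) * x i :=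
  summable_of_seriesConv_nonneg hx (fun i => star_mul_self_nonneg (x i))

variable (Γ : (ℕ → A) → A)
    (hadd : ∀ x y : ℕ → A, MemL2 x → MemL2 y → Γ (x + y) = Γ x + Γ y)
    (hAlin : ∀ (x : ℕ → A) (a : A), MemL2 x → Γ (fun i => x i * a) = Γ x * a)

include hAlin in
lemma Γ_zero : Γ 0 = 0 := by
  have := hAlin 0 0 (memL2_of_forall_ne_zero ∅ (fun _ _ => rfl))
  exact (by simpa using this : Γ (fun _ => 0) = 0)

include hadd hAlin in
lemma Γ_restrict (x : ℕ → A) (F : Finset ℕ) :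
    Γ (fun j => if j ∈ F then x j else 0) = ∑ i ∈ F, Γ (Pi.single i 1) * x i := by
  classical
  induction F using Finset.induction with
  | empty =>
    rw [Finset.sum_empty]
    refine (congrArg Γ ?_).trans (Γ_zero Γ hAlin)
    funext j
    simp
  | @insert i F hi ih =>
    have hsplit : (fun j => if j ∈ insert i F then x j else 0)
        = Pi.single i (x i) + (fun j => if j ∈ F then x j else 0) := by
      funext j
      by_cases hji : j = i
      · subst hji
        simp [hi, Pi.single_eq_same]
      · simp [Pi.single_eq_of_ne hji, Finset.mem_insert, hji]
    have hsingle : Γ (Pi.single i (x i)) = Γ (Pi.single i 1) * x i := by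
      have heq : Pi.single i (x i) = fun j => (Pi.single i (1 : A) : ℕ → A) j * x i := by
        funext j
        by_cases hji : j = i
        · subst hji; simp
        · simp [Pi.single_eq_of_ne hji]
      rw [heq, hAlin _ _ (memL2_single i 1)]
    rw [hsplit, hadd _ _ (memL2_single i (x i)) (memL2_restrict x F),
      Finset.sum_insert hi, hsingle, ih]

include hadd hAlin in
lemma key_hasSum (hbdd : ∃ C : ℝ, ∀ x : ℕ → A, MemL2 x →
      ‖Γ x‖ ≤ C * Real.sqrt ‖∑' i, star (x i) * x i‖)
    (x : ℕ → A) (hx : MemL2 x) :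
    HasSum (fun i => Γ (Pi.single i 1) * x i) (Γ x) := by
  classical
  obtain ⟨C₀, hC₀⟩ := hbdd
  set C : ℝ := max C₀ 0 with hCdef
  have hC : ∀ y : ℕ → A, MemL2 y → ‖Γ y‖ ≤ C * Real.sqrt ‖∑' i, star (y i) * y i‖ := by
    intro y hy
    refine (hC₀ y hy).trans ?_
    exact mul_le_mul_of_nonneg_right (le_max_left _ _) (Real.sqrt_nonneg _)
  have hCpos : 0 ≤ C := le_max_right _ _
  set f : ℕ → A := fun i => star (x i) * x i with hf
  have hfs : Summable f := summable_memL2 hx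
  -- bound for restrictions
  have hrestr : ∀ t : Finset ℕ,
      ‖∑ i ∈ t, Γ (Pi.single i 1) * x i‖ ≤ C * Real.sqrt ‖∑ i ∈ t, f i‖ := by
    intro t
    rw [← Γ_restrict Γ hadd hAlin x t]
    refine (hC _ (memL2_restrict x t)).trans (le_of_eq ?_)
    have h3 : (∑' j, star (if j ∈ t then x j else 0) * (if j ∈ t then x j else 0))
        = ∑ i ∈ t, f i := by
      rw [tsum_eq_sum (s := t) (fun j hj => by simp [hj])]
      exact Finset.sum_congr rfl fun j hj => by rw [if_pos hj]
    rw [h3]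
  -- summability
  have hsum : Summable fun i => Γ (Pi.single i 1) * x i := by
    rw [summable_iff_vanishing]
    intro e he
    obtain ⟨ε, hε, hεe⟩ := Metric.mem_nhds_iff.mp he
    have hδ : (0:ℝ) < (ε / (C + 1))^2 := by positivity
    obtain ⟨s, hs⟩ := hfs.vanishing (Metric.ball_mem_nhds 0 hδ)
    refine ⟨s, fun t ht => ?_⟩
    apply hεe
    rw [Metric.mem_ball, dist_zero_right]
    have h1 : ‖∑ i ∈ t, f i‖ < (ε / (C + 1))^2 := by
      have := hs t ht
      rwa [Metric.mem_ball, dist_zero_right] at this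
    calc ‖∑ i ∈ t, Γ (Pi.single i 1) * x i‖ ≤ C * Real.sqrt ‖∑ i ∈ t, f i‖ := hrestr t
      _ ≤ C * Real.sqrt ((ε / (C + 1))^2) :=
          mul_le_mul_of_nonneg_left (Real.sqrt_le_sqrt h1.le) hCpos
      _ = C * (ε / (C + 1)) := by
          rw [Real.sqrt_sq (by positivity)]
      _ < ε := by
          rw [div_eq_inv_mul, ← mul_assoc]
          have hlt : C * (C + 1)⁻¹ < 1 := by
            rw [mul_inv_lt_iff₀ (by positivity), one_mul]
            linarith
          calc C * (C + 1)⁻¹ * ε < 1 * ε := mul_lt_mul_of_pos_right hlt hε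
            _ = ε := one_mul ε
  -- convergence of partial sums to Γ x
  have htail : Tendsto (fun n => ∑ i ∈ Finset.range n, Γ (Pi.single i 1) * x i)
      atTop (nhds (Γ x)) := by
    have htailmem : ∀ n : ℕ, MemL2 (fun j => if j < n then 0 else x j) := by
      intro n
      refine seriesConv_of_summable (hfs.summable_of_eq_zero_or_self fun j => ?_)
      by_cases hj : j < n <;> simp [hj, hf]
    have hdecomp : ∀ n : ℕ, Γ x = (∑ i ∈ Finset.range n, Γ (Pi.single i 1) * x i)
        + Γ (fun j => if j < n then 0 else x j) := by
      intro n
      have hxeq : x = (fun j => if j ∈ Finset.range n then x j else 0)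
          + (fun j => if j < n then 0 else x j) := by
        funext j; by_cases hj : j < n <;> simp [Finset.mem_range, hj]
      conv_lhs => rw [hxeq]
      rw [hadd _ _ (memL2_restrict x (Finset.range n)) (htailmem n),
        Γ_restrict Γ hadd hAlin]
    have hT : ∀ n : ℕ, (∑' j, star (if j < n then 0 else x j) * (if j < n then 0 else x j))
        = (∑' i, f i) - ∑ i ∈ Finset.range n, f i := by
      intro n
      have htails : Summable (fun j => star (if j < n then 0 else x j)
          * (if j < n then 0 else x j)) := by
        refine hfs.summable_of_eq_zero_or_self fun j => ?_
        by_cases hj : j < n <;> simp [hj, hf]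
      have hheads : Summable (fun j => if j < n then f j else 0) := by
        refine hfs.summable_of_eq_zero_or_self fun j => ?_
        by_cases hj : j < n <;> simp [hj]
      have hsplit : (∑' i, f i) = (∑ i ∈ Finset.range n, f i) +
          ∑' j, star (if j < n then 0 else x j) * (if j < n then 0 else x j) := by
        have h4 : (∑' j, f j) = ∑' j, ((if j < n then f j else 0)
            + star (if j < n then 0 else x j) * (if j < n then 0 else x j)) := by
          refine tsum_congr fun j => ?_
          by_cases hj : j < n <;> simp [hj, hf]
        rw [h4, Summable.tsum_add hheads htails]
        congr 1
        rw [tsum_eq_sum (s := Finset.range n)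
          (fun j hj => by rw [if_neg (by simpa using hj)])]
        exact Finset.sum_congr rfl fun j hj => by rw [if_pos (by simpa using hj)]
      rw [hsplit]; abel
    rw [tendsto_iff_norm_sub_tendsto_zero]
    have hbound : ∀ n : ℕ, ‖(∑ i ∈ Finset.range n, Γ (Pi.single i 1) * x i) - Γ x‖
        ≤ C * Real.sqrt ‖(∑' i, f i) - ∑ i ∈ Finset.range n, f i‖ := by
      intro n
      have h1 : (∑ i ∈ Finset.range n, Γ (Pi.single i 1) * x i) - Γ x
          = -(Γ (fun j => if j < n then 0 else x j)) := by
        rw [hdecomp n]; abel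
      rw [h1, norm_neg]
      refine (hC _ (htailmem n)).trans (le_of_eq ?_)
      rw [hT n]
    refine squeeze_zero (fun n => norm_nonneg _) hbound ?_
    have h0 : Tendsto (fun n => (∑' i, f i) - ∑ i ∈ Finset.range n, f i) atTop (nhds 0) := by
      have h2 := (tendsto_const_nhds (x := ∑' i, f i) (f := atTop (α := ℕ))).sub
        hfs.hasSum.tendsto_sum_nat
      simpa using h2
    have h1 : Tendsto (fun n => ‖(∑' i, f i) - ∑ i ∈ Finset.range n, f i‖) atTop
        (nhds 0) := by
      simpa [Function.comp_def] using (continuous_norm.tendsto 0).comp h0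
    have h2 : Tendsto (fun n => Real.sqrt ‖(∑' i, f i) - ∑ i ∈ Finset.range n, f i‖)
        atTop (nhds 0) := by
      have h3 := (Real.continuous_sqrt.tendsto 0).comp h1
      simpa [Function.comp_def] using h3
    simpa using h2.const_mul C
  have h := tendsto_nhds_unique hsum.hasSum.tendsto_sum_nat htail
  exact h ▸ hsum.hasSum

end aux

variable {A : Type*} [CStarAlgebra A] [PartialOrder A] [StarOrderedRing A]

/-- For a unital C*-algebra `A`, a bounded `A`-linear functional `Γ : ℓ²(A) → A` is
adjointable iff, with `Γᵢ := Γ(eᵢ)*` (`eᵢ` the standard basis elements), the series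
`∑ Γᵢ* Γᵢ = ∑ Γ(eᵢ) Γ(eᵢ)*` converges in norm. Moreover, in that case
`Γ(x) = ∑ Γᵢ* xᵢ` and the adjoint is `Γ*(a) = (Γ₁ a, Γ₂ a, …)`. -/
theorem functional_adjointable_iff (Γ : (ℕ → A) → A)
    (hadd : ∀ x y : ℕ → A, MemL2 x → MemL2 y → Γ (x + y) = Γ x + Γ y)
    (hsmul : ∀ (c : ℂ) (x : ℕ → A), MemL2 x → Γ (c • x) = c • Γ x)
    (hAlin : ∀ (x : ℕ → A) (a : A), MemL2 x → Γ (fun i => x i * a) = Γ x * a)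
    (hbdd : ∃ C : ℝ, ∀ x : ℕ → A, MemL2 x →
      ‖Γ x‖ ≤ C * Real.sqrt ‖∑' i, star (x i) * x i‖) :
    -- adjointability iff norm convergence of `∑ Γᵢ* Γᵢ`
    ((∃ S : A → (ℕ → A), (∀ a, MemL2 (S a)) ∧
        ∀ (x : ℕ → A) (a : A), MemL2 x →
          star (Γ x) * a = ∑' i, star (x i) * S a i)
      ↔ SeriesConv fun i => Γ (Pi.single i 1) * star (Γ (Pi.single i 1))) ∧
    -- in the adjointable case: the explicit formulas for `Γ` and for its adjoint
    ((∃ S : A → (ℕ → A), (∀ a, MemL2 (S a)) ∧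
        ∀ (x : ℕ → A) (a : A), MemL2 x →
          star (Γ x) * a = ∑' i, star (x i) * S a i) →
      (∀ x : ℕ → A, MemL2 x → Γ x = ∑' i, Γ (Pi.single i 1) * x i) ∧
      (∀ (x : ℕ → A) (a : A), MemL2 x →
        star (Γ x) * a = ∑' i, star (x i) * (star (Γ (Pi.single i 1)) * a))) := by
  classical
  have hkey := key_hasSum Γ hadd hAlin hbdd
  have hform2 : ∀ (x : ℕ → A) (a : A), MemL2 x →
      star (Γ x) * a = ∑' i, star (x i) * (star (Γ (Pi.single i 1)) * a) := by
    intro x a hx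
    have h := (hkey x hx).star.mul_right a
    have h2 : (fun i => star (Γ (Pi.single i 1) * x i) * a)
        = fun i => star (x i) * (star (Γ (Pi.single i 1)) * a) := by
      funext i; rw [star_mul, mul_assoc]
    rw [h2] at h
    exact h.tsum_eq.symm
  refine ⟨⟨?_, ?_⟩, ?_⟩
  · rintro ⟨S, hS1, hS2⟩
    have hSval : ∀ (a : A) (j : ℕ), S a j = star (Γ (Pi.single j 1)) * a := by
      intro a j
      have h := hS2 (Pi.single j 1) a (memL2_single j 1)
      have h3 : (∑' i, star ((Pi.single j (1:A) : ℕ → A) i) * S a i) = S a j := by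
        rw [tsum_eq_single j (fun i hij => by
          rw [Pi.single_eq_of_ne hij, star_zero, zero_mul])]
        rw [Pi.single_eq_same, star_one, one_mul]
      rw [h3] at h
      exact h.symm
    have h : SeriesConv fun i => star (S 1 i) * S 1 i := hS1 1
    have heq : (fun i => star (S 1 i) * S 1 i)
        = fun i => Γ (Pi.single i 1) * star (Γ (Pi.single i 1)) := by
      funext i; rw [hSval 1 i, mul_one, star_star]
    rwa [heq] at h
  · intro hconv
    refine ⟨fun a i => star (Γ (Pi.single i 1)) * a, fun a => ?_, fun x a hx => hform2 x a hx⟩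
    obtain ⟨l, hl⟩ := hconv
    refine ⟨star a * l * a, ?_⟩
    have h2 := (hl.const_mul (star a)).mul_const a
    refine Filter.Tendsto.congr (fun n => ?_) h2
    rw [Finset.mul_sum, Finset.sum_mul]
    refine Finset.sum_congr rfl fun i _ => ?_
    simp only [star_mul, star_star]
    simp [mul_assoc]
  · exact fun _ => ⟨fun x hx => (hkey x hx).tsum_eq.symm, hform2⟩
end

section
/- Let A be a unital C*-algebra. If Γ : ℓ²(A) → A is a locally adjointable bounded A-linear functional, then for every sequence (γ_i) in A with ∑ γ_i* γ_i norm-convergent, the series ∑_i Γ_i* γ_i converges and defines an element of A, where Γ_i = Γ(e_i)*. -/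
open scoped RightActions
open Filter

variable {A : Type*} [CStarAlgebra A] [PartialOrder A] [StarOrderedRing A]

/-- A finitely supported sequence is in `ℓ²(A)`. -/
lemma memL2_of_bdd_support (x : ℕ → A) (N : ℕ) (h : ∀ i, N ≤ i → x i = 0) : MemL2 x := by
  refine ⟨∑ i ∈ Finset.range N, star (x i) * x i, ?_⟩
  apply tendsto_atTop_of_eventually_const (i₀ := N)
  intro n hn
  refine (Finset.sum_subset (Finset.range_subset_range.2 hn) ?_).symm
  intro i _ hi
  rw [h i (by simpa using hi)]
  simp

/-- If `A` is unital and `Γ : ℓ²(A) → A` is a locally adjointable bounded `A`-linear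
functional, then for every sequence `(γᵢ)` with `∑ γᵢ* γᵢ` norm-convergent the series
`∑ Γᵢ* γᵢ = ∑ Γ(eᵢ) γᵢ` converges in norm (where `Γᵢ = Γ(eᵢ)*`). -/
theorem locallyAdjointable_functional_series_convergence (Γ : (ℕ → A) → A)
    (hadd : ∀ x y : ℕ → A, MemL2 x → MemL2 y → Γ (x + y) = Γ x + Γ y)
    (hsmul : ∀ (c : ℂ) (x : ℕ → A), MemL2 x → Γ (c • x) = c • Γ x)
    (hAlin : ∀ (x : ℕ → A) (a : A), MemL2 x → Γ (fun i => x i * a) = Γ x * a)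
    (hbdd : ∃ C : ℝ, ∀ x : ℕ → A, MemL2 x →
      ‖Γ x‖ ≤ C * Real.sqrt ‖∑' i, star (x i) * x i‖)
    -- local adjointability: `Γ ∘ γ` is adjointable for every adjointable `γ : A → ℓ²(A)`,
    -- the latter being given by sequences with `∑ γᵢ* γᵢ` norm-convergent
    (hloc : ∀ γ : ℕ → A, SeriesConv (fun i => star (γ i) * γ i) →
      ∃ S : A → A, ∀ a b : A, star (Γ fun i => γ i * a) * b = star a * S b)
    (γ : ℕ → A) (hγ : SeriesConv fun i => star (γ i) * γ i) :
    SeriesConv fun i => Γ (Pi.single i 1) * γ i := by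
  obtain ⟨C, hC⟩ := hbdd
  -- truncations of γ
  set trunc : ℕ → ℕ → A := fun n j => if j < n then γ j else 0 with htrunc
  have memtrunc : ∀ n, MemL2 (trunc n) := by
    intro n
    refine memL2_of_bdd_support _ n fun i hi => ?_
    simp [htrunc, Nat.not_lt.2 hi]
  have memsingle : ∀ (n : ℕ) (a : A), MemL2 (Pi.single n a) := by
    intro n a
    refine memL2_of_bdd_support _ (n + 1) fun i hi => ?_
    simp only [Pi.single_apply]
    rw [if_neg (by omega)]
  have mem0 : MemL2 (0 : ℕ → A) := memL2_of_bdd_support _ 0 fun i _ => rfl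
  have hΓ0 : Γ 0 = 0 := by
    have h1 : Γ (0 + 0) = Γ 0 + Γ 0 := hadd 0 0 mem0 mem0
    rw [add_zero] at h1
    have h2 : Γ 0 + 0 = Γ 0 + Γ 0 := by rw [add_zero]; exact h1
    exact (add_left_cancel h2).symm
  -- partial sums coincide with Γ of truncations
  have key : ∀ n, ∑ i ∈ Finset.range n, Γ (Pi.single i 1) * γ i = Γ (trunc n) := by
    intro n
    induction n with
    | zero =>
      have : trunc 0 = 0 := funext fun j => by simp [htrunc]
      simp [this, hΓ0]
    | succ n ih =>
      have hsplit : trunc (n + 1) = trunc n + Pi.single n (γ n) := by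
        funext j
        simp only [htrunc, Pi.add_apply, Pi.single_apply]
        rcases lt_trichotomy j n with h | h | h
        · rw [if_pos (by omega), if_pos h, if_neg (by omega), add_zero]
        · subst h; rw [if_pos (by omega), if_neg (by omega), if_pos rfl, zero_add]
        · rw [if_neg (by omega), if_neg (by omega), if_neg (by omega), add_zero]
      have hsingle : Γ (Pi.single n (γ n)) = Γ (Pi.single n 1) * γ n := by
        have he : (Pi.single n (γ n) : ℕ → A) = fun j => (Pi.single n (1 : A) : ℕ → A) j * γ n := by
          funext j
          simp only [Pi.single_apply]
          split_ifs <;> simp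
        rw [he, hAlin _ _ (memsingle n 1)]
      rw [Finset.sum_range_succ, ih, hsplit, hadd _ _ (memtrunc n) (memsingle n (γ n)), hsingle]
  -- the sequence Γ (trunc n) is Cauchy
  obtain ⟨L, hL⟩ := hγ
  have hT : CauchySeq fun n => ∑ i ∈ Finset.range n, star (γ i) * γ i := hL.cauchySeq
  rw [Metric.cauchySeq_iff'] at hT
  have hcauchy : CauchySeq fun n => Γ (trunc n) := by
    rw [Metric.cauchySeq_iff']
    intro ε hε
    have hC1 : (0:ℝ) < |C| + 1 := by positivity
    set δ : ℝ := (ε / (|C| + 1)) ^ 2 with hδdef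
    have hδ : 0 < δ := by positivity
    obtain ⟨N, hN⟩ := hT δ hδ
    refine ⟨N, fun n hn => ?_⟩
    -- the difference of truncations
    set d : ℕ → A := fun j => if N ≤ j ∧ j < n then γ j else 0 with hd
    have hdmem : MemL2 d := by
      refine memL2_of_bdd_support _ n fun i hi => ?_
      simp [hd]; omega
    have hsplit : trunc n = trunc N + d := by
      funext j
      simp only [htrunc, hd, Pi.add_apply]
      rcases lt_or_ge j n with h2 | h2
      · rw [if_pos h2]
        rcases lt_or_ge j N with h | h
        · rw [if_pos h, if_neg (by omega), add_zero]
        · rw [if_neg (by omega), if_pos ⟨h, h2⟩, zero_add]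
      · rw [if_neg (by omega), if_neg (by omega), if_neg (by omega), add_zero]
    have hdiff : Γ (trunc n) - Γ (trunc N) = Γ d := by
      rw [hsplit, hadd _ _ (memtrunc N) hdmem, add_sub_cancel_left]
    -- compute the tsum for d
    have htsum : ∑' j, star (d j) * d j
        = ∑ j ∈ Finset.Ico N n, star (γ j) * γ j := by
      rw [tsum_eq_sum (s := Finset.Ico N n) (by
        intro j hj
        have : d j = 0 := by simp only [hd]; rw [if_neg]; simpa [Finset.mem_Ico] using hj
        simp [this])]
      refine Finset.sum_congr rfl fun j hj => ?_
      have : d j = γ j := by simp only [hd]; rw [if_pos]; simpa [Finset.mem_Ico] using hj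
      rw [this]
    have hIco : ∑ j ∈ Finset.Ico N n, star (γ j) * γ j
        = (∑ i ∈ Finset.range n, star (γ i) * γ i) - ∑ i ∈ Finset.range N, star (γ i) * γ i :=
      Finset.sum_Ico_eq_sub _ hn
    have hnorm : ‖∑' j, star (d j) * d j‖ < δ := by
      rw [htsum, hIco, ← dist_eq_norm]
      exact hN n hn
    have hsq : Real.sqrt ‖∑' j, star (d j) * d j‖ < ε / (|C| + 1) := by
      have := Real.sqrt_lt_sqrt (norm_nonneg _) hnorm
      rwa [hδdef, Real.sqrt_sq (by positivity)] at this
    have hbound : ‖Γ d‖ ≤ |C| * Real.sqrt ‖∑' j, star (d j) * d j‖ :=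
      (hC d hdmem).trans (mul_le_mul_of_nonneg_right (le_abs_self C) (Real.sqrt_nonneg _))
    rw [dist_eq_norm, hdiff]
    calc ‖Γ d‖ ≤ |C| * Real.sqrt ‖∑' j, star (d j) * d j‖ := hbound
      _ ≤ |C| * (ε / (|C| + 1)) :=
          mul_le_mul_of_nonneg_left hsq.le (abs_nonneg C)
      _ < (|C| + 1) * (ε / (|C| + 1)) :=
          mul_lt_mul_of_pos_right (by linarith) (by positivity)
      _ = ε := by field_simp
  obtain ⟨l, hl⟩ := cauchySeq_tendsto_of_complete hcauchy
  exact ⟨l, by simpa [key] using hl⟩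
end
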